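/- For every n ≥ 3, the coefficient sequence of the n-th Lucas polynomial L_n(x) = Σ_{m=0}^{⌊n/2⌋} a_m x^m, where a_m = (n/(n−m))·C(n−m, m), is log-concave (a_m² ≥ a_{m−1}·a_{m+1} for all valid m) and hence unimodal. -/

import Mathlib

/-- The `m`-th coefficient of the `n`-th Lucas polynomial:
`a_m = (n/(n-m))·C(n-m, m)` (an exact natural-number division). -/
def lucasCoeff (n m : ℕ) : ℕ :=
  n * (n - m).choose m / (n - m)

lemma lucasCoeff_mul (n m : ℕ) (hm : 2*m ≤ n) (hn : 0 < n) :
    lucasCoeff n m * (n - m) = n * (n - m).choose m := by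
  obtain ⟨N, rfl⟩ : ∃ N, n = N + m := ⟨n - m, by omega⟩
  have hNm : N + m - m = N := by omega
  rcases Nat.eq_zero_or_pos m with rfl | hm1
  · have h1 : N / N = 1 := Nat.div_self (by omega)
    simp [lucasCoeff, h1]
  obtain ⟨j, rfl⟩ : ∃ j, m = j + 1 := ⟨m - 1, by omega⟩
  obtain ⟨K, rfl⟩ : ∃ K, N = K + 1 := ⟨N - 1, by omega⟩
  have hs := Nat.add_one_mul_choose_eq K j
  have key : (K + 1 + (j+1)) * (K+1).choose (j+1)
      = (K + 1) * ((K+1).choose (j+1) + K.choose j) := by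
    have e : (K + 1 + (j+1)) * (K+1).choose (j+1)
        = (K+1) * (K+1).choose (j+1) + (K+1).choose (j+1) * (j+1) := by ring
    rw [e, ← hs]; ring
  have : lucasCoeff (K + 1 + (j+1)) (j+1) = (K+1).choose (j+1) + K.choose j := by
    unfold lucasCoeff
    rw [hNm, key, Nat.mul_div_cancel_left _ (by omega : 0 < K + 1)]
  rw [this, hNm, key]
  ring

lemma lucasCoeff_pos (n m : ℕ) (hm : 2*m ≤ n) (hn : 0 < n) : 0 < lucasCoeff n m := by
  have h := lucasCoeff_mul n m hm hn
  have hc : 0 < n * (n - m).choose m :=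
    Nat.mul_pos hn (Nat.choose_pos (by omega))
  rcases Nat.eq_zero_or_pos (lucasCoeff n m) with h0 | h1
  · rw [h0, zero_mul] at h; omega
  · exact h1

set_option maxHeartbeats 1000000 in
lemma lucas_core (p q : ℕ) :
    (p+q+4).choose p * (p+q+2).choose (p+2) * ((p+q+3)*(p+q+3)) ≤
    (p+q+3).choose (p+1) * (p+q+3).choose (p+1) * ((p+q+4)*(p+q+2)) := by
  have i1a := Nat.choose_succ_right_eq (p+q+4) p
  rw [show p+q+4-p = q+4 from by omega] at i1a
  have i1b := Nat.choose_mul_succ_eq (p+q+3) (p+1)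
  rw [show p+q+3+1 = p+q+4 from by omega, show p+q+4-(p+1) = q+3 from by omega] at i1b
  have i2a := Nat.choose_succ_right_eq (p+q+3) (p+1)
  rw [show p+1+1 = p+2 from rfl, show p+q+3-(p+1) = q+2 from by omega] at i2a
  have i2b := Nat.choose_mul_succ_eq (p+q+2) (p+2)
  rw [show p+q+2+1 = p+q+3 from by omega, show p+q+3-(p+2) = q+1 from by omega] at i2b
  have J1a : ((p+q+4).choose (p+1) : ℤ) * ((p:ℤ)+1) = ((p+q+4).choose p : ℤ) * ((q:ℤ)+4) := by
    exact_mod_cast congrArg (Nat.cast : ℕ → ℤ) i1a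
  have J1b : ((p+q+3).choose (p+1) : ℤ) * ((p:ℤ)+(q:ℤ)+4) = ((p+q+4).choose (p+1) : ℤ) * ((q:ℤ)+3) := by
    exact_mod_cast congrArg (Nat.cast : ℕ → ℤ) i1b
  have J2a : ((p+q+3).choose (p+2) : ℤ) * ((p:ℤ)+2) = ((p+q+3).choose (p+1) : ℤ) * ((q:ℤ)+2) := by
    exact_mod_cast congrArg (Nat.cast : ℕ → ℤ) i2a
  have J2b : ((p+q+2).choose (p+2) : ℤ) * ((p:ℤ)+(q:ℤ)+3) = ((p+q+3).choose (p+2) : ℤ) * ((q:ℤ)+1) := by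
    exact_mod_cast congrArg (Nat.cast : ℕ → ℤ) i2b
  zify
  set a : ℤ := ((p+q+4).choose p : ℤ) with ha
  set b : ℤ := ((p+q+3).choose (p+1) : ℤ) with hb
  set c : ℤ := ((p+q+2).choose (p+2) : ℤ) with hc
  set d : ℤ := ((p+q+4).choose (p+1) : ℤ) with hd
  set e : ℤ := ((p+q+3).choose (p+2) : ℤ) with he
  set P : ℤ := (p:ℤ) with hP
  set Q : ℤ := (q:ℤ) with hQ
  have P0 : (0:ℤ) ≤ P := by positivity
  have Q0 : (0:ℤ) ≤ Q := by positivity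
  have hb0 : (0:ℤ) ≤ b := by positivity
  have J1 : a * (Q+4) * (Q+3) = b * (P+1) * (P+Q+4) := by
    linear_combination (-(Q+3)) * J1a - (P+1) * J1b
  have J2 : b * (Q+2) * (Q+1) = c * (P+2) * (P+Q+3) := by
    linear_combination (-(Q+1)) * J2a - (P+2) * J2b
  have hK : (0:ℤ) < (Q+4)*(Q+3)*(P+2)*(P+Q+3) := by positivity
  have E1 : (P+1)*(Q+2) ≤ (P+2)*(Q+4) := by nlinarith
  have E2 : (Q+1)*(P+Q+3) ≤ (Q+3)*(P+Q+2) := by nlinarith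
  have E : ((P+1)*(Q+2))*((Q+1)*(P+Q+3)) ≤ ((P+2)*(Q+4))*((Q+3)*(P+Q+2)) := by
    apply mul_le_mul E1 E2 (by positivity) (by positivity)
  have big : a * c * ((P+Q+3)*(P+Q+3)) * ((Q+4)*(Q+3)*(P+2)*(P+Q+3)) ≤
      b * b * ((P+Q+4)*(P+Q+2)) * ((Q+4)*(Q+3)*(P+2)*(P+Q+3)) := by
    calc a * c * ((P+Q+3)*(P+Q+3)) * ((Q+4)*(Q+3)*(P+2)*(P+Q+3))
        = (b*b*((P+Q+4)*(P+Q+3))) * (((P+1)*(Q+2))*((Q+1)*(P+Q+3))) := by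
          linear_combination (c*(P+2)*(P+Q+3)^3) * J1 - (b*(P+1)*(P+Q+4)*(P+Q+3)^2) * J2
      _ ≤ (b*b*((P+Q+4)*(P+Q+3))) * (((P+2)*(Q+4))*((Q+3)*(P+Q+2))) := by
          apply mul_le_mul_of_nonneg_left E (by positivity)
      _ = b * b * ((P+Q+4)*(P+Q+2)) * ((Q+4)*(Q+3)*(P+2)*(P+Q+3)) := by ring
  exact le_of_mul_le_mul_right big hK

lemma lucasCoeff_logconcave_step (n m : ℕ) (h1 : 1 ≤ m) (h2 : 2*m+2 ≤ n) :
    lucasCoeff n (m - 1) * lucasCoeff n (m + 1) ≤ lucasCoeff n m * lucasCoeff n m := by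
  obtain ⟨p, rfl⟩ : ∃ p, m = p + 1 := ⟨m - 1, by omega⟩
  obtain ⟨q, hq⟩ : ∃ q, n = 2*p + q + 4 := ⟨n - (2*p + 4), by omega⟩
  subst hq
  set n := 2*p + q + 4 with hn
  have hn0 : 0 < n := by omega
  have f0 : lucasCoeff n p * (p+q+4) = n * (p+q+4).choose p := by
    have h := lucasCoeff_mul n p (by omega) hn0
    rwa [show n - p = p+q+4 from by omega] at h
  have f1 : lucasCoeff n (p+1) * (p+q+3) = n * (p+q+3).choose (p+1) := by
    have h := lucasCoeff_mul n (p+1) (by omega) hn0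
    rwa [show n - (p+1) = p+q+3 from by omega] at h
  have f2 : lucasCoeff n (p+2) * (p+q+2) = n * (p+q+2).choose (p+2) := by
    have h := lucasCoeff_mul n (p+2) (by omega) hn0
    rwa [show n - (p+2) = p+q+2 from by omega] at h
  have core := lucas_core p q
  have hD : 0 < (p+q+4)*(p+q+2)*((p+q+3)*(p+q+3)) := by positivity
  have hm1 : p + 1 - 1 = p := by omega
  rw [hm1, show p+1+1 = p+2 from rfl]
  have big : lucasCoeff n p * lucasCoeff n (p+2) * ((p+q+4)*(p+q+2)*((p+q+3)*(p+q+3)))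
      ≤ lucasCoeff n (p+1) * lucasCoeff n (p+1) * ((p+q+4)*(p+q+2)*((p+q+3)*(p+q+3))) := by
    calc lucasCoeff n p * lucasCoeff n (p+2) * ((p+q+4)*(p+q+2)*((p+q+3)*(p+q+3)))
        = (lucasCoeff n p * (p+q+4)) * (lucasCoeff n (p+2) * (p+q+2)) * ((p+q+3)*(p+q+3)) := by
          ring
      _ = (n * (p+q+4).choose p) * (n * (p+q+2).choose (p+2)) * ((p+q+3)*(p+q+3)) := by
          rw [f0, f2]
      _ = (n*n) * ((p+q+4).choose p * (p+q+2).choose (p+2) * ((p+q+3)*(p+q+3))) := by ring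
      _ ≤ (n*n) * ((p+q+3).choose (p+1) * (p+q+3).choose (p+1) * ((p+q+4)*(p+q+2))) :=
          Nat.mul_le_mul_left _ core
      _ = (n * (p+q+3).choose (p+1)) * (n * (p+q+3).choose (p+1)) * ((p+q+4)*(p+q+2)) := by ring
      _ = (lucasCoeff n (p+1) * (p+q+3)) * (lucasCoeff n (p+1) * (p+q+3)) * ((p+q+4)*(p+q+2)) := by
          rw [f1]
      _ = lucasCoeff n (p+1) * lucasCoeff n (p+1) * ((p+q+4)*(p+q+2)*((p+q+3)*(p+q+3))) := by
          ring
  exact Nat.le_of_mul_le_mul_right big hD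

/-- For `n ≥ 3`, the coefficient sequence `a_m = (n/(n-m))·C(n-m,m)` of the `n`-th
Lucas polynomial is log-concave on `0 ≤ m ≤ ⌊n/2⌋`, and hence unimodal. -/
theorem lucasCoeff_log_concave_and_unimodal (n : ℕ) (hn : 3 ≤ n) :
    (∀ m, 1 ≤ m → m + 1 ≤ n / 2 →
      lucasCoeff n (m - 1) * lucasCoeff n (m + 1) ≤ lucasCoeff n m * lucasCoeff n m) ∧
    ∃ j ≤ n / 2,
      (∀ i, 1 ≤ i → i ≤ j → lucasCoeff n (i - 1) ≤ lucasCoeff n i) ∧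
      (∀ i, j ≤ i → i + 1 ≤ n / 2 → lucasCoeff n (i + 1) ≤ lucasCoeff n i) := by
  classical
  have hstep : ∀ m, 1 ≤ m → m + 1 ≤ n / 2 →
      lucasCoeff n (m - 1) * lucasCoeff n (m + 1) ≤ lucasCoeff n m * lucasCoeff n m := by
    intro m hm1 hm2
    exact lucasCoeff_logconcave_step n m hm1 (by omega)
  refine ⟨hstep, ?_⟩
  have hQ : ∃ i, n / 2 < i + 1 ∨ lucasCoeff n (i+1) ≤ lucasCoeff n i :=
    ⟨n / 2, Or.inl (by omega)⟩
  refine ⟨Nat.find hQ, ?_, ?_, ?_⟩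
  · exact Nat.find_min' hQ (Or.inl (by omega))
  · intro i hi1 hij
    have hmin := Nat.find_min hQ (show i - 1 < Nat.find hQ by omega)
    push_neg at hmin
    have h2 := hmin.2
    rw [show i - 1 + 1 = i from by omega] at h2
    exact h2.le
  · intro i hji hi
    induction i, hji using Nat.le_induction with
    | base =>
      rcases Nat.find_spec hQ with h' | h'
      · omega
      · exact h'
    | succ i hij IH =>
      have h1 : i + 1 ≤ n / 2 := by omega
      have hIH := IH h1
      have hlc := lucasCoeff_logconcave_step n (i+1) (by omega) (by omega)
      rw [show i + 1 - 1 = i from by omega] at hlc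
      have hpos : 0 < lucasCoeff n i := lucasCoeff_pos n i (by omega) (by omega)
      have chain : lucasCoeff n (i+1+1) * lucasCoeff n i ≤ lucasCoeff n (i+1) * lucasCoeff n i :=
        calc lucasCoeff n (i+1+1) * lucasCoeff n i
            = lucasCoeff n i * lucasCoeff n (i+1+1) := Nat.mul_comm _ _
          _ ≤ lucasCoeff n (i+1) * lucasCoeff n (i+1) := hlc
          _ ≤ lucasCoeff n (i+1) * lucasCoeff n i := Nat.mul_le_mul_left _ hIH
      exact Nat.le_of_mul_le_mul_right chain hpos
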